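/- If G is a k-OA that is a Glushkov translation of a deterministic k-ORE r, then the k-ORE strip(s) is deterministic, where s is any SORE over the marked alphabet equivalent to a marking H of G (in particular the output of a sound-and-complete SOA-to-SORE translation applied to H). -/

import Mathlib

open Computability

/-- Regular expressions (with explicit parentheses) built from ∅, ε, letters,
concatenation, union, optional `?` and one-or-more `⁺`. -/
inductive PRE (α : Type) where
  | empty : PRE α
  | eps : PRE α
  | char : α → PRE α
  | paren : PRE α → PRE α
  | cat : PRE α → PRE α → PRE α
  | alt : PRE α → PRE α → PRE α
  | opt : PRE α → PRE α
  | pos : PRE α → PRE α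

/-- The language of a regular expression. -/
def PRE.lang {α : Type} : PRE α → Language α
  | .empty => 0
  | .eps => 1
  | .char a => {[a]}
  | .paren r => r.lang
  | .cat r s => r.lang * s.lang
  | .alt r s => r.lang + s.lang
  | .opt r => r.lang + 1
  | .pos r => r.lang * (r.lang)∗

/-- Replace the i-th occurrence of each letter `a` by the marked symbol `(a, i)`,
threading occurrence counters. -/
def PRE.markAux {α : Type} [DecidableEq α] : PRE α → (α → ℕ) → PRE (α × ℕ) × (α → ℕ)
  | .empty, c => (.empty, c)
  | .eps, c => (.eps, c)
  | .char a, c => (.char (a, c a + 1), fun b => if b = a then c a + 1 else c b)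
  | .paren r, c => let p := r.markAux c; (.paren p.1, p.2)
  | .cat r s, c => let p := r.markAux c; let q := s.markAux p.2; (.cat p.1 q.1, q.2)
  | .alt r s, c => let p := r.markAux c; let q := s.markAux p.2; (.alt p.1 q.1, q.2)
  | .opt r, c => let p := r.markAux c; (.opt p.1, p.2)
  | .pos r, c => let p := r.markAux c; (.pos p.1, p.2)

/-- The marked version r̄ of a regular expression. -/
def PRE.mark {α : Type} [DecidableEq α] (r : PRE α) : PRE (α × ℕ) :=
  (r.markAux fun _ => 0).1

/-- A regular expression is deterministic (one-unambiguous) if its marked version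
admits no two words w·a⁽ⁱ⁾·v and w·a⁽ʲ⁾·v′ with i ≠ j. -/
def PRE.Deterministic {α : Type} [DecidableEq α] (r : PRE α) : Prop :=
  ∀ (w v v' : List (α × ℕ)) (a : α) (i j : ℕ),
    w ++ (a, i) :: v ∈ r.mark.lang → w ++ (a, j) :: v' ∈ r.mark.lang → i = j

/-- Number of occurrences of the letter `a` in `r`. -/
def PRE.rep {α : Type} [DecidableEq α] : PRE α → α → ℕ
  | .empty, _ => 0
  | .eps, _ => 0
  | .char b, a => if b = a then 1 else 0
  | .paren r, a => r.rep a
  | .cat r s, a => r.rep a + s.rep a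
  | .alt r s, a => r.rep a + s.rep a
  | .opt r, a => r.rep a
  | .pos r, a => r.rep a

/-- `r` is a k-occurrence regular expression: every letter occurs at most `k` times. -/
def PRE.IsKORE {α : Type} [DecidableEq α] (k : ℕ) (r : PRE α) : Prop :=
  ∀ a, r.rep a ≤ k

/-- Length of the string representation (letters, ∅, ε, operators ·, +, ?, ⁺ and
parentheses each count as one character). -/
def PRE.len {α : Type} : PRE α → ℕ
  | .empty => 1
  | .eps => 1
  | .char _ => 1
  | .paren r => r.len + 2
  | .cat r s => r.len + s.len + 1
  | .alt r s => r.len + s.len + 1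
  | .opt r => r.len + 1
  | .pos r => r.len + 1

/-- An automaton with unlabeled edges and labeled states: a node-labeled graph with
distinguished source and sink; the source has no incoming edges and the sink no
outgoing edges. -/
structure OA (σ α : Type) where
  src : σ
  snk : σ
  E : σ → σ → Prop
  lab : σ → α
  src_ne_snk : src ≠ snk
  not_into_src : ∀ s, ¬ E s src
  not_out_snk : ∀ s, ¬ E snk s

/-- A state is internal if it is neither the source nor the sink. -/
def OA.Internal {σ α : Type} (G : OA σ α) (s : σ) : Prop := s ≠ G.src ∧ s ≠ G.snk

/-- A word a₁…aₙ is accepted if there is a walk src, s₁, …, sₙ, snk with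
lab(sᵢ) = aᵢ. -/
def OA.Accepts {σ α : Type} (G : OA σ α) (w : List α) : Prop :=
  ∃ run : List σ, run.map G.lab = w ∧ List.Chain' G.E (G.src :: (run ++ [G.snk]))

/-- `G` is a k-occurrence automaton: at most k states share the same label. -/
def OA.IsKOA {σ α : Type} [Fintype σ] [DecidableEq σ] [DecidableEq α]
    (G : OA σ α) (k : ℕ) : Prop :=
  ∀ a : α,
    (Finset.univ.filter fun s => s ≠ G.src ∧ s ≠ G.snk ∧ G.lab s = a).card ≤ k

/-- `H` is a marking of `G`: same states and edges, and the states are relabeled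
injectively with marked symbols whose first component is the original label. -/
def OA.IsMarking {σ α : Type} (G : OA σ α) (H : OA σ (α × ℕ)) : Prop :=
  H.src = G.src ∧ H.snk = G.snk ∧ H.E = G.E ∧
  (∀ s : σ, s ≠ G.src → s ≠ G.snk → (H.lab s).1 = G.lab s) ∧
  Set.InjOn H.lab {s : σ | s ≠ G.src ∧ s ≠ G.snk}

/-- Whether ε ∈ L(r). -/
def PRE.nullable {α : Type} : PRE α → Bool
  | .empty => false
  | .eps => true
  | .char _ => false
  | .paren r => r.nullable
  | .cat r s => r.nullable && s.nullable
  | .alt r s => r.nullable || s.nullable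
  | .opt _ => true
  | .pos r => r.nullable

/-- pos(r): the set of symbols occurring in r. -/
def PRE.posFin {α : Type} [DecidableEq α] : PRE α → Finset α
  | .empty => ∅
  | .eps => ∅
  | .char a => {a}
  | .paren r => r.posFin
  | .cat r s => r.posFin ∪ s.posFin
  | .alt r s => r.posFin ∪ s.posFin
  | .opt r => r.posFin
  | .pos r => r.posFin

/-- first(r): symbols that can start a word of L(r). -/
def PRE.firstFin {α : Type} [DecidableEq α] : PRE α → Finset α
  | .empty => ∅
  | .eps => ∅
  | .char a => {a}
  | .paren r => r.firstFin
  | .cat r s => if r.nullable then r.firstFin ∪ s.firstFin else r.firstFin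
  | .alt r s => r.firstFin ∪ s.firstFin
  | .opt r => r.firstFin
  | .pos r => r.firstFin

/-- last(r): symbols that can end a word of L(r). -/
def PRE.lastFin {α : Type} [DecidableEq α] : PRE α → Finset α
  | .empty => ∅
  | .eps => ∅
  | .char a => {a}
  | .paren r => r.lastFin
  | .cat r s => if s.nullable then r.lastFin ∪ s.lastFin else s.lastFin
  | .alt r s => r.lastFin ∪ s.lastFin
  | .opt r => r.lastFin
  | .pos r => r.lastFin

/-- follow(r, x): symbols that can follow the symbol x in a word of L(r). -/
def PRE.followFin {α : Type} [DecidableEq α] : PRE α → α → Finset α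
  | .empty, _ => ∅
  | .eps, _ => ∅
  | .char _, _ => ∅
  | .paren r, x => r.followFin x
  | .cat r s, x =>
      if x ∈ r.posFin then
        (if x ∈ r.lastFin then r.followFin x ∪ s.firstFin else r.followFin x)
      else s.followFin x
  | .alt r s, x => if x ∈ r.posFin then r.followFin x else s.followFin x
  | .opt r, x => r.followFin x
  | .pos r, x =>
      if x ∈ r.lastFin then r.followFin x ∪ r.firstFin else r.followFin x

/-- `G` is a Glushkov translation of the k-ORE `r` (with marked version `rbar`),
witnessed by the bijection `ρ` from the internal states of `G` to pos(rbar):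
(1) v ∈ Succ(src) ⟺ ρ(v) ∈ first(rbar); (2) v ∈ Pred(snk) ⟺ ρ(v) ∈ last(rbar);
(3) v ∈ Succ(w) ⟺ ρ(v) ∈ follow(rbar, ρ(w)); (4) strip(ρ(v)) = lab(v);
moreover the src→snk edge exists iff ε ∈ L(rbar). -/
structure OA.IsGlushkov {σ α : Type} [DecidableEq α] (G : OA σ α)
    (rbar : PRE (α × ℕ)) (ρ : σ → α × ℕ) : Prop where
  mem : ∀ s : σ, G.Internal s → ρ s ∈ rbar.posFin
  inj : Set.InjOn ρ {s : σ | G.Internal s}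
  surj : ∀ x ∈ rbar.posFin, ∃ s : σ, G.Internal s ∧ ρ s = x
  first : ∀ s : σ, G.Internal s → (G.E G.src s ↔ ρ s ∈ rbar.firstFin)
  last : ∀ s : σ, G.Internal s → (G.E s G.snk ↔ ρ s ∈ rbar.lastFin)
  follow : ∀ s t : σ, G.Internal s → G.Internal t →
    (G.E s t ↔ ρ t ∈ rbar.followFin (ρ s))
  strip : ∀ s : σ, G.Internal s → (ρ s).1 = G.lab s
  eps : G.E G.src G.snk ↔ rbar.nullable = true

/-- Renaming of the letters of an expression (used for strip: map Prod.fst). -/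
def PRE.map {α β : Type} (f : α → β) : PRE α → PRE β
  | .empty => .empty
  | .eps => .eps
  | .char a => .char (f a)
  | .paren r => .paren (r.map f)
  | .cat r s => .cat (r.map f) (s.map f)
  | .alt r s => .alt (r.map f) (s.map f)
  | .opt r => .opt (r.map f)
  | .pos r => .pos (r.map f)


section Aux
namespace PRE
set_option linter.unusedSectionVars false
variable {β : Type} [DecidableEq β]

lemma first_subset_pos (e : PRE β) : ∀ x ∈ e.firstFin, x ∈ e.posFin := by
  induction e with
  | empty => simp [firstFin, posFin]
  | eps => simp [firstFin, posFin]
  | char a => simp [firstFin, posFin]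
  | paren r ih => simpa [firstFin, posFin] using ih
  | cat r s ihr ihs =>
      intro x hx
      simp only [firstFin, posFin, Finset.mem_union] at hx ⊢
      split at hx
      · rcases Finset.mem_union.1 hx with h | h
        · exact Or.inl (ihr _ h)
        · exact Or.inr (ihs _ h)
      · exact Or.inl (ihr _ hx)
  | alt r s ihr ihs =>
      intro x hx
      simp only [firstFin, posFin, Finset.mem_union] at hx ⊢
      rcases hx with h | h
      · exact Or.inl (ihr _ h)
      · exact Or.inr (ihs _ h)
  | opt r ih => simpa [firstFin, posFin] using ih
  | pos r ih => simpa [firstFin, posFin] using ih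

lemma last_subset_pos (e : PRE β) : ∀ x ∈ e.lastFin, x ∈ e.posFin := by
  induction e with
  | empty => simp [lastFin, posFin]
  | eps => simp [lastFin, posFin]
  | char a => simp [lastFin, posFin]
  | paren r ih => simpa [lastFin, posFin] using ih
  | cat r s ihr ihs =>
      intro x hx
      simp only [lastFin, posFin, Finset.mem_union] at hx ⊢
      split at hx
      · rcases Finset.mem_union.1 hx with h | h
        · exact Or.inl (ihr _ h)
        · exact Or.inr (ihs _ h)
      · exact Or.inr (ihs _ hx)
  | alt r s ihr ihs =>
      intro x hx
      simp only [lastFin, posFin, Finset.mem_union] at hx ⊢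
      rcases hx with h | h
      · exact Or.inl (ihr _ h)
      · exact Or.inr (ihs _ h)
  | opt r ih => simpa [lastFin, posFin] using ih
  | pos r ih => simpa [lastFin, posFin] using ih

lemma follow_subset_pos (e : PRE β) : ∀ y x, x ∈ e.followFin y → x ∈ e.posFin := by
  induction e with
  | empty => simp [followFin, posFin]
  | eps => simp [followFin, posFin]
  | char a => simp [followFin, posFin]
  | paren r ih => simpa [followFin, posFin] using ih
  | cat r s ihr ihs =>
      intro y x hx
      simp only [followFin, posFin, Finset.mem_union] at hx ⊢
      split at hx
      · split at hx
        · rcases Finset.mem_union.1 hx with h | h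
          · exact Or.inl (ihr _ _ h)
          · exact Or.inr (s.first_subset_pos _ h)
        · exact Or.inl (ihr _ _ hx)
      · exact Or.inr (ihs _ _ hx)
  | alt r s ihr ihs =>
      intro y x hx
      simp only [followFin, posFin, Finset.mem_union] at hx ⊢
      split at hx
      · exact Or.inl (ihr _ _ hx)
      · exact Or.inr (ihs _ _ hx)
  | opt r ih => simpa [followFin, posFin] using ih
  | pos r ih =>
      intro y x hx
      simp only [followFin, posFin] at hx ⊢
      split at hx
      · rcases Finset.mem_union.1 hx with h | h
        · exact ih _ _ h
        · exact r.first_subset_pos _ h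
      · exact ih _ _ hx

lemma nullable_iff (e : PRE β) : e.nullable = true ↔ [] ∈ e.lang := by
  induction e with
  | empty =>
      simp only [nullable, lang, Bool.false_eq_true, false_iff]
      exact Language.notMem_zero _
  | eps => simp [nullable, lang, Language.mem_one]
  | char a =>
      simp only [nullable, lang, Bool.false_eq_true, false_iff, Set.mem_singleton_iff]
      exact fun h => List.cons_ne_nil a [] h.symm
  | paren r ih => simpa [nullable, lang] using ih
  | cat r s ihr ihs =>
      simp only [nullable, lang, Bool.and_eq_true, ihr, ihs]
      constructor
      · rintro ⟨h1, h2⟩; exact ⟨[], h1, [], h2, rfl⟩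
      · rintro ⟨u, hu, v, hv, huv⟩
        rcases List.append_eq_nil_iff.mp huv with ⟨rfl, rfl⟩
        exact ⟨hu, hv⟩
  | alt r s ihr ihs =>
      simp only [nullable, lang, Bool.or_eq_true, ihr, ihs, Language.mem_add]
  | opt r ih =>
      simp only [nullable, lang, true_iff]
      exact (Language.mem_add _ _ _).2 (Or.inr ((Language.mem_one _).2 rfl))
  | pos r ih =>
      simp only [nullable, lang, ih]
      constructor
      · intro h; exact ⟨[], h, [], Language.nil_mem_kstar _, rfl⟩
      · rintro ⟨u, hu, v, hv, huv⟩
        rcases List.append_eq_nil_iff.mp huv with ⟨rfl, rfl⟩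
        exact hu

lemma mem_pos_of_mem_lang (e : PRE β) : ∀ w ∈ e.lang, ∀ x ∈ w, x ∈ e.posFin := by
  induction e with
  | empty => intro w hw; exact absurd hw (Language.notMem_zero _)
  | eps => intro w hw; simp [lang, Language.mem_one] at hw; simp [hw]
  | char a =>
      intro w hw
      rw [lang] at hw
      replace hw : w = [a] := hw
      subst hw; simp [posFin]
  | paren r ih => simpa [lang, posFin] using ih
  | cat r s ihr ihs =>
      rintro w ⟨u, hu, v, hv, rfl⟩ x hx
      simp only [posFin, Finset.mem_union]
      rcases List.mem_append.1 hx with h | h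
      · exact Or.inl (ihr _ hu _ h)
      · exact Or.inr (ihs _ hv _ h)
  | alt r s ihr ihs =>
      intro w hw x hx
      simp only [posFin, Finset.mem_union]
      rcases (Language.mem_add _ _ _).1 hw with h | h
      · exact Or.inl (ihr _ h _ hx)
      · exact Or.inr (ihs _ h _ hx)
  | opt r ih =>
      intro w hw x hx
      rcases (Language.mem_add _ _ _).1 hw with h | h
      · exact ih _ h _ hx
      · simp [Language.mem_one] at h; subst h; simp at hx
  | pos r ih =>
      rintro w ⟨u, hu, v, hv, rfl⟩ x hx
      simp only [posFin]
      rcases List.mem_append.1 hx with h | h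
      · exact ih _ hu _ h
      · rcases Language.mem_kstar.1 hv with ⟨S, rfl, hS⟩
        rcases List.mem_flatten.1 h with ⟨l, hl, hxl⟩
        exact ih _ (hS _ hl) _ hxl

lemma one_le_rep_iff (e : PRE β) (x : β) : 1 ≤ e.rep x ↔ x ∈ e.posFin := by
  induction e with
  | empty => simp [rep, posFin]
  | eps => simp [rep, posFin]
  | char a =>
      simp only [rep, posFin, Finset.mem_singleton]
      split <;> rename_i h
      · simp [h]
      · simpa using fun hx => h hx.symm
  | paren r ih => simpa [rep, posFin] using ih
  | cat r s ihr ihs =>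
      simp only [rep, posFin, Finset.mem_union, ← ihr, ← ihs]; omega
  | alt r s ihr ihs =>
      simp only [rep, posFin, Finset.mem_union, ← ihr, ← ihs]; omega
  | opt r ih => simpa [rep, posFin] using ih
  | pos r ih => simpa [rep, posFin] using ih


lemma disjoint_pos_of_rep {r s : PRE β} (h : ∀ x, r.rep x + s.rep x ≤ 1) :
    ∀ x, x ∈ r.posFin → x ∉ s.posFin := by
  intro x hr hs
  have h1 := (r.one_le_rep_iff x).2 hr
  have h2 := (s.one_le_rep_iff x).2 hs
  have := h x
  omega

section Mark
variable {α : Type} [DecidableEq α]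

lemma markAux_counter_mono (e : PRE α) : ∀ (c : α → ℕ) (a : α), c a ≤ (e.markAux c).2 a := by
  induction e with
  | empty => intro c a; simp [markAux]
  | eps => intro c a; simp [markAux]
  | char b =>
      intro c a
      simp only [markAux]
      split <;> rename_i h
      · subst h; omega
      · exact le_refl _
  | paren r ih => intro c a; simpa [markAux] using ih c a
  | cat r s ihr ihs =>
      intro c a
      simp only [markAux]
      exact le_trans (ihr c a) (ihs _ a)
  | alt r s ihr ihs =>
      intro c a
      simp only [markAux]
      exact le_trans (ihr c a) (ihs _ a)
  | opt r ih => intro c a; simpa [markAux] using ih c a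
  | pos r ih => intro c a; simpa [markAux] using ih c a

lemma markAux_pos_range (e : PRE α) : ∀ (c : α → ℕ) (x : α × ℕ),
    x ∈ (e.markAux c).1.posFin → c x.1 < x.2 ∧ x.2 ≤ (e.markAux c).2 x.1 := by
  induction e with
  | empty => intro c x hx; simp [markAux, posFin] at hx
  | eps => intro c x hx; simp [markAux, posFin] at hx
  | char b =>
      intro c x hx
      simp only [markAux, posFin, Finset.mem_singleton] at hx
      subst hx
      simp only [markAux]
      exact ⟨by omega, by simp⟩
  | paren r ih => intro c x hx; simpa [markAux, posFin] using ih c x (by simpa [markAux, posFin] using hx)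
  | cat r s ihr ihs =>
      intro c x hx
      simp only [markAux, posFin, Finset.mem_union] at hx ⊢
      rcases hx with h | h
      · rcases ihr c x h with ⟨h1, h2⟩
        exact ⟨h1, le_trans h2 (s.markAux_counter_mono _ x.1)⟩
      · rcases ihs _ x h with ⟨h1, h2⟩
        exact ⟨lt_of_le_of_lt (r.markAux_counter_mono c x.1) h1, h2⟩
  | alt r s ihr ihs =>
      intro c x hx
      simp only [markAux, posFin, Finset.mem_union] at hx ⊢
      rcases hx with h | h
      · rcases ihr c x h with ⟨h1, h2⟩
        exact ⟨h1, le_trans h2 (s.markAux_counter_mono _ x.1)⟩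
      · rcases ihs _ x h with ⟨h1, h2⟩
        exact ⟨lt_of_le_of_lt (r.markAux_counter_mono c x.1) h1, h2⟩
  | opt r ih => intro c x hx; simpa [markAux, posFin] using ih c x (by simpa [markAux, posFin] using hx)
  | pos r ih => intro c x hx; simpa [markAux, posFin] using ih c x (by simpa [markAux, posFin] using hx)

lemma markAux_rep (e : PRE α) : ∀ (c : α → ℕ) (x : α × ℕ), ((e.markAux c).1).rep x ≤ 1 := by
  induction e with
  | empty => intro c x; simp [markAux, rep]
  | eps => intro c x; simp [markAux, rep]
  | char b =>
      intro c x
      simp only [markAux, rep]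
      split <;> omega
  | paren r ih => intro c x; simpa [markAux, rep] using ih c x
  | cat r s ihr ihs =>
      intro c x
      simp only [markAux, rep]
      by_cases h1 : 1 ≤ ((r.markAux c).1).rep x
      · by_cases h2 : 1 ≤ ((s.markAux (r.markAux c).2).1).rep x
        · exfalso
          have hr := r.markAux_pos_range c x (((r.markAux c).1.one_le_rep_iff x).1 h1)
          have hs := s.markAux_pos_range (r.markAux c).2 x
            (((s.markAux (r.markAux c).2).1.one_le_rep_iff x).1 h2)
          omega
        · have := ihr c x; omega
      · have := ihs (r.markAux c).2 x; omega
  | alt r s ihr ihs =>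
      intro c x
      simp only [markAux, rep]
      by_cases h1 : 1 ≤ ((r.markAux c).1).rep x
      · by_cases h2 : 1 ≤ ((s.markAux (r.markAux c).2).1).rep x
        · exfalso
          have hr := r.markAux_pos_range c x (((r.markAux c).1.one_le_rep_iff x).1 h1)
          have hs := s.markAux_pos_range (r.markAux c).2 x
            (((s.markAux (r.markAux c).2).1.one_le_rep_iff x).1 h2)
          omega
        · have := ihr c x; omega
      · have := ihs (r.markAux c).2 x; omega
  | opt r ih => intro c x; simpa [markAux, rep] using ih c x
  | pos r ih => intro c x; simpa [markAux, rep] using ih c x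

lemma mark_rep (e : PRE α) (x : α × ℕ) : e.mark.rep x ≤ 1 :=
  e.markAux_rep _ x

end Mark


lemma mem_kstar_of_mul {L : Language β} {m k : List β} (hm : m ∈ L) (hk : k ∈ L∗) :
    m ++ k ∈ L∗ := by
  rcases Language.mem_kstar.1 hk with ⟨S, rfl, hS⟩
  refine Language.mem_kstar.2 ⟨m :: S, rfl, ?_⟩
  intro y hy
  rcases List.mem_cons.1 hy with rfl | hy
  · exact hm
  · exact hS y hy

lemma chain_split {γ : Type} (P Q : γ → γ → Prop) :
    ∀ l : List γ, List.Chain' Q l → ¬ List.Chain' P l →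
    ∃ u y z v, l = u ++ y :: z :: v ∧ List.Chain' P (u ++ [y]) ∧ ¬ P y z ∧ Q y z ∧
      List.Chain' Q (z :: v) := by
  intro l
  induction l with
  | nil => intro _ h; exact absurd List.isChain_nil h
  | cons x t ih =>
    intro hQ hP
    match t with
    | [] => exact absurd (List.isChain_singleton x) hP
    | x' :: rest =>
      by_cases hxx : P x x'
      · have hQ' := (List.isChain_cons_cons.1 hQ).2
        have hP' : ¬ List.Chain' P (x' :: rest) := fun h => hP (List.isChain_cons_cons.2 ⟨hxx, h⟩)
        obtain ⟨u, y, z, v, heq, hu, hyz, hQyz, hzv⟩ := ih hQ' hP'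
        refine ⟨x :: u, y, z, v, by rw [List.cons_append, ← heq], ?_, hyz, hQyz, hzv⟩
        rw [List.cons_append]
        refine List.isChain_cons.2 ⟨?_, hu⟩
        intro h hh
        cases u with
        | nil =>
            simp only [List.nil_append] at heq hh
            simp only [List.head?_cons, Option.mem_def, Option.some.injEq] at hh
            subst hh
            have : x' = y := (List.cons.inj heq).1
            rwa [← this]
        | cons a u' =>
            simp only [List.cons_append] at heq hh
            simp only [List.head?_cons, Option.mem_def, Option.some.injEq] at hh
            subst hh
            have : x' = a := (List.cons.inj heq).1
            rwa [← this]
      · exact ⟨[], x, x', rest, rfl, List.isChain_singleton x, hxx,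
          (List.isChain_cons_cons.1 hQ).1, (List.isChain_cons_cons.1 hQ).2⟩

lemma chain_transfer {R1 R2 : β → β → Prop} (S : Finset β)
    (hstep : ∀ x y, x ∈ S → R2 x y → R1 x y ∧ y ∈ S) :
    ∀ (t : List β) (x : β), x ∈ S → List.Chain' R2 (x :: t) →
      List.Chain' R1 (x :: t) ∧ ∀ z ∈ x :: t, z ∈ S := by
  intro t
  induction t with
  | nil => intro x hx _; exact ⟨List.isChain_singleton x, by simpa using hx⟩
  | cons w t' ih =>
    intro x hx hch
    obtain ⟨h1, h2⟩ := List.isChain_cons_cons.1 hch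
    obtain ⟨hr, hw⟩ := hstep x w hx h1
    obtain ⟨hc', hS'⟩ := ih w hw h2
    refine ⟨List.isChain_cons_cons.2 ⟨hr, hc'⟩, ?_⟩
    intro z hz
    rcases List.mem_cons.1 hz with rfl | hz
    · exact hx
    · exact hS' z hz

lemma chain_cat_left {r s : PRE β} :
    ∀ (t : List β) (x : β), x ∈ r.posFin →
      List.Chain' (fun a b => b ∈ (PRE.cat r s).followFin a) (x :: t) →
      (List.Chain' (fun a b => b ∈ r.followFin a) (x :: t) ∧ ∀ z ∈ x :: t, z ∈ r.posFin) ∨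
      ∃ u z v yl, x :: t = (x :: u) ++ z :: v ∧
        List.Chain' (fun a b => b ∈ r.followFin a) (x :: u) ∧
        (∀ w ∈ x :: u, w ∈ r.posFin) ∧
        (x :: u).getLast? = some yl ∧ yl ∈ r.lastFin ∧
        z ∈ s.firstFin ∧
        List.Chain' (fun a b => b ∈ (PRE.cat r s).followFin a) (z :: v) := by
  intro t
  induction t with
  | nil => intro x hx _; exact Or.inl ⟨List.isChain_singleton x, by simpa using hx⟩
  | cons w t' ih =>
    intro x hx hch
    obtain ⟨h1, h2⟩ := List.isChain_cons_cons.1 hch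
    rw [followFin, if_pos hx] at h1
    by_cases hw : w ∈ r.followFin x
    · have hwpos := r.follow_subset_pos x w hw
      rcases ih w hwpos h2 with ⟨hc, hp⟩ | ⟨u, z, v, yl, heq, hcu, hpu, hgl, hyl, hzf, hcz⟩
      · refine Or.inl ⟨List.isChain_cons_cons.2 ⟨hw, hc⟩, ?_⟩
        intro z hz
        rcases List.mem_cons.1 hz with rfl | hz
        · exact hx
        · exact hp z hz
      · refine Or.inr ⟨w :: u, z, v, yl, by simpa using congrArg (List.cons x) heq,
          List.isChain_cons_cons.2 ⟨hw, hcu⟩, ?_, by rw [List.getLast?_cons_cons]; exact hgl,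
          hyl, hzf, hcz⟩
        intro a ha
        rcases List.mem_cons.1 ha with rfl | ha
        · exact hx
        · exact hpu a ha
    · have hxl : x ∈ r.lastFin := by
        by_contra hxl
        rw [if_neg hxl] at h1
        exact hw h1
      rw [if_pos hxl] at h1
      have hwf : w ∈ s.firstFin := (Finset.mem_union.1 h1).resolve_left hw
      exact Or.inr ⟨[], w, t', x, rfl, List.isChain_singleton x, by simpa using hx,
        rfl, hxl, hwf, h2⟩

theorem glushkov_suff (e : PRE β) :
    ∀ (_ : ∀ x, e.rep x ≤ 1) (l : List β) (x y : β), l.head? = some x → x ∈ e.firstFin →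
      l.getLast? = some y → y ∈ e.lastFin →
      List.Chain' (fun u v => v ∈ e.followFin u) l → l ∈ e.lang := by
  induction e with
  | empty =>
      intro _ l x y hh hxf
      rw [firstFin] at hxf
      exact absurd hxf (Finset.notMem_empty _)
  | eps =>
      intro _ l x y hh hxf
      rw [firstFin] at hxf
      exact absurd hxf (Finset.notMem_empty _)
  | char c =>
      intro _ l x y hh hxf hgl hyl hch
      cases l with
      | nil => simp at hh
      | cons a t =>
        simp only [List.head?_cons, Option.some.injEq] at hh
        subst hh
        rw [firstFin, Finset.mem_singleton] at hxf
        subst hxf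
        cases t with
        | nil => rw [lang]; rfl
        | cons b t' =>
          obtain ⟨h1, -⟩ := List.isChain_cons_cons.1 hch
          rw [followFin] at h1
          exact absurd h1 (Finset.notMem_empty _)
  | paren r ih =>
      intro he l x y hh hxf hgl hyl hch
      rw [firstFin] at hxf
      rw [lastFin] at hyl
      rw [lang]
      refine ih (fun z => by simpa [rep] using he z) l x y hh hxf hgl hyl ?_
      simpa only [followFin] using hch
  | opt r ih =>
      intro he l x y hh hxf hgl hyl hch
      rw [firstFin] at hxf
      rw [lastFin] at hyl
      rw [lang]
      refine (Language.mem_add _ _ _).2 (Or.inl ?_)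
      refine ih (fun z => by simpa [rep] using he z) l x y hh hxf hgl hyl ?_
      simpa only [followFin] using hch
  | alt r s ihr ihs =>
      intro he l x y hh hxf hgl hyl hch
      have her : ∀ z, r.rep z ≤ 1 := fun z => by have := he z; simp [rep] at this; omega
      have hes : ∀ z, s.rep z ≤ 1 := fun z => by have := he z; simp [rep] at this; omega
      have hd : ∀ z ∈ r.posFin, z ∉ s.posFin :=
        disjoint_pos_of_rep (fun z => by simpa [rep] using he z)
      cases l with
      | nil => simp at hh
      | cons a t =>
        simp only [List.head?_cons, Option.some.injEq] at hh
        subst a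
        rw [firstFin, Finset.mem_union] at hxf
        rw [lastFin, Finset.mem_union] at hyl
        rw [lang]
        rcases hxf with h | h
        · have hx := r.first_subset_pos _ h
          obtain ⟨hch', hpos⟩ := chain_transfer r.posFin
            (fun a b ha hab => by
              rw [followFin, if_pos ha] at hab
              exact ⟨hab, r.follow_subset_pos _ _ hab⟩) t x hx hch
          have hyl' : y ∈ r.lastFin := by
            rcases hyl with h' | h'
            · exact h'
            · have hy : y ∈ r.posFin := by
                have := List.getLast?_eq_getLast (l := x :: t) (by simp)
                rw [hgl] at this
                have hmem := List.getLast_mem (l := x :: t) (by simp)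
                rw [← (Option.some.inj this)] at hmem
                exact hpos _ hmem
              exact absurd (s.last_subset_pos _ h') (hd _ hy)
          exact (Language.mem_add _ _ _).2
            (Or.inl (ihr her (x :: t) x y rfl h hgl hyl' hch'))
        · have hx := s.first_subset_pos _ h
          obtain ⟨hch', hpos⟩ := chain_transfer s.posFin
            (fun a b ha hab => by
              rw [followFin, if_neg (fun hr' => hd _ hr' ha)] at hab
              exact ⟨hab, s.follow_subset_pos _ _ hab⟩) t x hx hch
          have hyl' : y ∈ s.lastFin := by
            rcases hyl with h' | h'
            · have hy : y ∈ s.posFin := by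
                have := List.getLast?_eq_getLast (l := x :: t) (by simp)
                rw [hgl] at this
                have hmem := List.getLast_mem (l := x :: t) (by simp)
                rw [← (Option.some.inj this)] at hmem
                exact hpos _ hmem
              exact absurd hy (hd _ (r.last_subset_pos _ h'))
            · exact h'
          exact (Language.mem_add _ _ _).2
            (Or.inr (ihs hes (x :: t) x y rfl h hgl hyl' hch'))
  | cat r s ihr ihs =>
      intro he l x y hh hxf hgl hyl hch
      have her : ∀ z, r.rep z ≤ 1 := fun z => by have := he z; simp [rep] at this; omega
      have hes : ∀ z, s.rep z ≤ 1 := fun z => by have := he z; simp [rep] at this; omega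
      have hd : ∀ z ∈ r.posFin, z ∉ s.posFin :=
        disjoint_pos_of_rep (fun z => by simpa [rep] using he z)
      cases l with
      | nil => simp at hh
      | cons a t =>
        simp only [List.head?_cons, Option.some.injEq] at hh
        subst a
        rw [lang]
        have hymem : ∀ (T : List β), (x :: t).getLast? = (x :: T).getLast? →
            (∀ z ∈ x :: T, z ∈ r.posFin) → y ∈ r.posFin := by
          intro T hT hpos
          have := List.getLast?_eq_getLast (l := x :: T) (by simp)
          rw [← hT, hgl] at this
          have hmem := List.getLast_mem (l := x :: T) (by simp)
          rw [← (Option.some.inj this)] at hmem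
          exact hpos _ hmem
        have hside : x ∈ r.firstFin ∨ (r.nullable = true ∧ x ∈ s.firstFin) := by
          rw [firstFin] at hxf
          split at hxf
          · rcases Finset.mem_union.1 hxf with h | h
            · exact Or.inl h
            · exact Or.inr ⟨by assumption, h⟩
          · exact Or.inl hxf
        rcases hside with hxf' | ⟨hnul, hxf'⟩
        · have hx : x ∈ r.posFin := r.first_subset_pos _ hxf'
          rcases chain_cat_left t x hx hch with ⟨hch', hpos⟩ | 
            ⟨u, z, v, yl, heq, hcu, hpu, hglu, hyl', hzf, hcz⟩
          · -- all in r; s must be nullable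
            have hy : y ∈ r.posFin := hymem t rfl hpos
            have hsnul : s.nullable = true ∧ y ∈ r.lastFin := by
              rw [lastFin] at hyl
              split at hyl
              · rcases Finset.mem_union.1 hyl with h' | h'
                · exact ⟨by assumption, h'⟩
                · exact absurd (s.last_subset_pos _ h') (hd _ hy)
              · exact absurd (s.last_subset_pos _ hyl) (hd _ hy)
            refine ⟨x :: t, ihr her (x :: t) x y rfl hxf' hgl hsnul.2 hch', [],
              (s.nullable_iff).1 hsnul.1, by simp⟩
          · -- split into r-part and s-part
            have hzs : z ∈ s.posFin := s.first_subset_pos _ hzf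
            obtain ⟨hchs, hposs⟩ := chain_transfer s.posFin
              (fun a b ha hab => by
                rw [followFin, if_neg (fun hr' => hd _ hr' ha)] at hab
                exact ⟨hab, s.follow_subset_pos _ _ hab⟩) v z hzs hcz
            have hglzv : (z :: v).getLast? = some y := by
              rw [heq, List.getLast?_append] at hgl
              simpa using hgl
            have hy : y ∈ s.posFin := by
              have := List.getLast?_eq_getLast (l := z :: v) (by simp)
              rw [hglzv] at this
              have hmem := List.getLast_mem (l := z :: v) (by simp)
              rw [← (Option.some.inj this)] at hmem
              exact hposs _ hmem
            have hyls : y ∈ s.lastFin := by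
              rw [lastFin] at hyl
              split at hyl
              · rcases Finset.mem_union.1 hyl with h' | h'
                · exact absurd hy (hd _ (r.last_subset_pos _ h'))
                · exact h'
              · exact hyl
            refine ⟨x :: u, ihr her (x :: u) x yl rfl hxf' hglu hyl' hcu, z :: v,
              ihs hes (z :: v) z y rfl hzf hglzv hyls hchs, heq.symm⟩
        · -- x starts in s
          have hx : x ∈ s.posFin := s.first_subset_pos _ hxf'
          obtain ⟨hch', hpos⟩ := chain_transfer s.posFin
            (fun a b ha hab => by
              rw [followFin, if_neg (fun hr' => hd _ hr' ha)] at hab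
              exact ⟨hab, s.follow_subset_pos _ _ hab⟩) t x hx hch
          have hy : y ∈ s.posFin := by
            have := List.getLast?_eq_getLast (l := x :: t) (by simp)
            rw [hgl] at this
            have hmem := List.getLast_mem (l := x :: t) (by simp)
            rw [← (Option.some.inj this)] at hmem
            exact hpos _ hmem
          have hyls : y ∈ s.lastFin := by
            rw [lastFin] at hyl
            split at hyl
            · rcases Finset.mem_union.1 hyl with h' | h'
              · exact absurd hy (hd _ (r.last_subset_pos _ h'))
              · exact h'
            · exact hyl
          exact ⟨[], (r.nullable_iff).1 hnul, x :: t,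
            ihs hes (x :: t) x y rfl hxf' hgl hyls hch', by simp⟩
  | pos r ih =>
      intro he l x y hh hxf hgl hyl hch
      have her : ∀ z, r.rep z ≤ 1 := fun z => by simpa [rep] using he z
      rw [firstFin] at hxf
      rw [lastFin] at hyl
      rw [lang]
      have inner : ∀ (n : ℕ) (l : List β) (x y : β), l.length ≤ n →
          l.head? = some x → x ∈ r.firstFin → l.getLast? = some y → y ∈ r.lastFin →
          List.Chain' (fun u v => v ∈ (PRE.pos r).followFin u) l →
          l ∈ r.lang * r.lang∗ := by
        intro n
        induction n with
        | zero =>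
            intro l x y hlen hh'
            cases l with
            | nil => simp at hh'
            | cons a t => simp at hlen
        | succ n ihn =>
            intro l x y hlen hh' hxf' hgl' hyl' hch'
            by_cases hc : List.Chain' (fun a b => b ∈ r.followFin a) l
            · exact ⟨l, ih her l x y hh' hxf' hgl' hyl' hc, [],
                Language.nil_mem_kstar _, by simp⟩
            · obtain ⟨u, yy, z, v, heq, hPu, hPyz, hQyz, hQzv⟩ :=
                chain_split (fun a b => b ∈ r.followFin a)
                  (fun a b => b ∈ (PRE.pos r).followFin a) l hch' hc
              subst heq
              rw [followFin] at hQyz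
              have hbreak : yy ∈ r.lastFin ∧ z ∈ r.firstFin := by
                by_cases hyy : yy ∈ r.lastFin
                · rw [if_pos hyy] at hQyz
                  exact ⟨hyy, (Finset.mem_union.1 hQyz).resolve_left hPyz⟩
                · rw [if_neg hyy] at hQyz
                  exact absurd hQyz hPyz
              have hx' : (u ++ [yy]).head? = some x := by
                cases u with
                | nil =>
                    simp only [List.nil_append, List.head?_cons] at hh' ⊢
                    exact hh'
                | cons a u' =>
                    simp only [List.cons_append, List.head?_cons] at hh' ⊢
                    exact hh'
              have hu : u ++ [yy] ∈ r.lang :=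
                ih her (u ++ [yy]) x yy hx' hxf' (List.getLast?_concat (l := u)) hbreak.1 hPu
              have hglzv : (z :: v).getLast? = some y := by
                rw [List.getLast?_append] at hgl'
                simpa using hgl'
              have hzv : z :: v ∈ r.lang * r.lang∗ := by
                refine ihn (z :: v) z y ?_ rfl hbreak.2 hglzv hyl' hQzv
                simp only [List.length_append, List.length_cons] at hlen ⊢
                omega
              have hzv' : z :: v ∈ r.lang∗ := by
                obtain ⟨m, hm, kk, hk, hmk⟩ := hzv
                rw [← hmk]
                exact mem_kstar_of_mul hm hk
              refine ⟨u ++ [yy], hu, z :: v, hzv', by simp⟩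
      refine inner l.length l x y le_rfl hh hxf hgl hyl hch


section Relabel
variable {α : Type} [DecidableEq α]

lemma relabel (f : β → α) (b0 : β) :
    ∀ (s : PRE β) (c : α → ℕ), (∀ x, s.rep x ≤ 1) →
    ∃ σ : (α × ℕ) → β,
      (∀ x ∈ ((s.map f).markAux c).1.posFin, f (σ x) = x.1 ∧ σ x ∈ s.posFin) ∧
      (∀ x ∈ ((s.map f).markAux c).1.posFin, ∀ y ∈ ((s.map f).markAux c).1.posFin,
        σ x = σ y → x = y) ∧
      (∀ w ∈ ((s.map f).markAux c).1.lang, w.map σ ∈ s.lang) := by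
  intro s
  induction s with
  | empty =>
      intro c _
      refine ⟨fun _ => b0, ?_, ?_, ?_⟩
      · intro x hx; simp [PRE.map, markAux, posFin] at hx
      · intro x hx; simp [PRE.map, markAux, posFin] at hx
      · intro w hw; exact absurd hw (Language.notMem_zero _)
  | eps =>
      intro c _
      refine ⟨fun _ => b0, ?_, ?_, ?_⟩
      · intro x hx; simp [PRE.map, markAux, posFin] at hx
      · intro x hx; simp [PRE.map, markAux, posFin] at hx
      · intro w hw
        simp only [PRE.map, markAux, lang, Language.mem_one] at hw
        subst hw
        exact (Language.mem_one _).2 rfl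
  | char b =>
      intro c _
      refine ⟨fun _ => b, ?_, ?_, ?_⟩
      · intro x hx
        simp only [PRE.map, markAux, posFin, Finset.mem_singleton] at hx
        subst hx
        exact ⟨rfl, by simp [posFin]⟩
      · intro x hx y hy _
        simp only [PRE.map, markAux, posFin, Finset.mem_singleton] at hx hy
        rw [hx, hy]
      · intro w hw
        simp only [PRE.map, markAux, lang, Set.mem_singleton_iff] at hw
        subst hw
        rw [lang]
        rfl
  | paren r ih =>
      intro c hrep
      obtain ⟨σ, h1, h2, h3⟩ := ih c (fun x => by simpa [rep] using hrep x)
      refine ⟨σ, ?_, ?_, ?_⟩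
      · intro x hx
        simp only [PRE.map, markAux, posFin] at hx
        obtain ⟨ha, hb⟩ := h1 x hx
        exact ⟨ha, by simpa [posFin] using hb⟩
      · intro x hx y hy
        simp only [PRE.map, markAux, posFin] at hx hy
        exact h2 x hx y hy
      · intro w hw
        simp only [PRE.map, markAux, lang] at hw ⊢
        exact h3 w hw
  | opt r ih =>
      intro c hrep
      obtain ⟨σ, h1, h2, h3⟩ := ih c (fun x => by simpa [rep] using hrep x)
      refine ⟨σ, ?_, ?_, ?_⟩
      · intro x hx
        simp only [PRE.map, markAux, posFin] at hx
        obtain ⟨ha, hb⟩ := h1 x hx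
        exact ⟨ha, by simpa [posFin] using hb⟩
      · intro x hx y hy
        simp only [PRE.map, markAux, posFin] at hx hy
        exact h2 x hx y hy
      · intro w hw
        simp only [PRE.map, markAux, lang] at hw ⊢
        rcases (Language.mem_add _ _ _).1 hw with h | h
        · exact (Language.mem_add _ _ _).2 (Or.inl (h3 w h))
        · rw [Language.mem_one] at h
          subst h
          exact (Language.mem_add _ _ _).2 (Or.inr ((Language.mem_one _).2 rfl))
  | pos r ih =>
      intro c hrep
      obtain ⟨σ, h1, h2, h3⟩ := ih c (fun x => by simpa [rep] using hrep x)
      refine ⟨σ, ?_, ?_, ?_⟩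
      · intro x hx
        simp only [PRE.map, markAux, posFin] at hx
        obtain ⟨ha, hb⟩ := h1 x hx
        exact ⟨ha, by simpa [posFin] using hb⟩
      · intro x hx y hy
        simp only [PRE.map, markAux, posFin] at hx hy
        exact h2 x hx y hy
      · intro w hw
        simp only [PRE.map, markAux, lang] at hw ⊢
        obtain ⟨u, hu, v, hv, huv⟩ := hw
        subst huv
        rw [List.map_append]
        refine ⟨u.map σ, h3 u hu, (v.map σ), ?_, rfl⟩
        obtain ⟨S, rfl, hS⟩ := Language.mem_kstar.1 hv
        refine Language.mem_kstar.2 ⟨S.map (List.map σ), by rw [List.map_flatten], ?_⟩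
        intro y hy
        obtain ⟨m, hm, rfl⟩ := List.mem_map.1 hy
        exact h3 m (hS m hm)
  | cat r s ihr ihs =>
      intro c hrep
      have hrepr : ∀ x, r.rep x ≤ 1 := fun x => by have := hrep x; simp [rep] at this; omega
      have hreps : ∀ x, s.rep x ≤ 1 := fun x => by have := hrep x; simp [rep] at this; omega
      have hd : ∀ z ∈ r.posFin, z ∉ s.posFin :=
        disjoint_pos_of_rep (fun z => by simpa [rep] using hrep z)
      obtain ⟨σ₁, h1, h2, h3⟩ := ihr c hrepr
      obtain ⟨σ₂, g1, g2, g3⟩ := ihs ((r.map f).markAux c).2 hreps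
      set P := ((r.map f).markAux c).1 with hP
      set Q := ((s.map f).markAux ((r.map f).markAux c).2).1 with hQ
      have hdisj : ∀ x ∈ P.posFin, x ∉ Q.posFin := by
        intro x hx hx'
        have h1' := (r.map f).markAux_pos_range c x hx
        have h2' := (s.map f).markAux_pos_range ((r.map f).markAux c).2 x hx'
        omega
      refine ⟨fun x => if x ∈ P.posFin then σ₁ x else σ₂ x, ?_, ?_, ?_⟩
      · intro x hx
        simp only [PRE.map, markAux, posFin, Finset.mem_union, ← hP, ← hQ] at hx
        rcases hx with h | h
        all_goals beta_reduce
        · rw [if_pos h]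
          obtain ⟨ha, hb⟩ := h1 x h
          exact ⟨ha, by simp only [posFin, Finset.mem_union]; exact Or.inl hb⟩
        · rw [if_neg (fun h' => hdisj x h' h)]
          obtain ⟨ha, hb⟩ := g1 x h
          exact ⟨ha, by simp only [posFin, Finset.mem_union]; exact Or.inr hb⟩
      · intro x hx y hy hxy
        beta_reduce at hxy
        simp only [PRE.map, markAux, posFin, Finset.mem_union, ← hP, ← hQ] at hx hy
        rcases hx with hx | hx <;> rcases hy with hy | hy
        · rw [if_pos hx, if_pos hy] at hxy
          exact h2 x hx y hy hxy
        · rw [if_pos hx, if_neg (fun h' => hdisj y h' hy)] at hxy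
          exact absurd ((g1 y hy).2) (hxy ▸ hd _ ((h1 x hx).2))
        · rw [if_neg (fun h' => hdisj x h' hx), if_pos hy] at hxy
          exact absurd ((g1 x hx).2) (hxy.symm ▸ hd _ ((h1 y hy).2))
        · rw [if_neg (fun h' => hdisj x h' hx), if_neg (fun h' => hdisj y h' hy)] at hxy
          exact g2 x hx y hy hxy
      · intro w hw
        simp only [PRE.map, markAux, lang, ← hP, ← hQ] at hw ⊢
        obtain ⟨u, hu, v, hv, huv⟩ := hw
        subst huv
        rw [List.map_append]
        have hu' : u.map (fun x => if x ∈ P.posFin then σ₁ x else σ₂ x) = u.map σ₁ :=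
          List.map_congr_left (fun x hx => if_pos (P.mem_pos_of_mem_lang u hu x hx))
        have hv' : v.map (fun x => if x ∈ P.posFin then σ₁ x else σ₂ x) = v.map σ₂ :=
          List.map_congr_left (fun x hx =>
            if_neg (fun h' => hdisj x h' (Q.mem_pos_of_mem_lang v hv x hx)))
        rw [hu', hv']
        exact ⟨u.map σ₁, h3 u hu, v.map σ₂, g3 v hv, rfl⟩
  | alt r s ihr ihs =>
      intro c hrep
      have hrepr : ∀ x, r.rep x ≤ 1 := fun x => by have := hrep x; simp [rep] at this; omega
      have hreps : ∀ x, s.rep x ≤ 1 := fun x => by have := hrep x; simp [rep] at this; omega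
      have hd : ∀ z ∈ r.posFin, z ∉ s.posFin :=
        disjoint_pos_of_rep (fun z => by simpa [rep] using hrep z)
      obtain ⟨σ₁, h1, h2, h3⟩ := ihr c hrepr
      obtain ⟨σ₂, g1, g2, g3⟩ := ihs ((r.map f).markAux c).2 hreps
      set P := ((r.map f).markAux c).1 with hP
      set Q := ((s.map f).markAux ((r.map f).markAux c).2).1 with hQ
      have hdisj : ∀ x ∈ P.posFin, x ∉ Q.posFin := by
        intro x hx hx'
        have h1' := (r.map f).markAux_pos_range c x hx
        have h2' := (s.map f).markAux_pos_range ((r.map f).markAux c).2 x hx'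
        omega
      refine ⟨fun x => if x ∈ P.posFin then σ₁ x else σ₂ x, ?_, ?_, ?_⟩
      · intro x hx
        simp only [PRE.map, markAux, posFin, Finset.mem_union, ← hP, ← hQ] at hx
        rcases hx with h | h
        all_goals beta_reduce
        · rw [if_pos h]
          obtain ⟨ha, hb⟩ := h1 x h
          exact ⟨ha, by simp only [posFin, Finset.mem_union]; exact Or.inl hb⟩
        · rw [if_neg (fun h' => hdisj x h' h)]
          obtain ⟨ha, hb⟩ := g1 x h
          exact ⟨ha, by simp only [posFin, Finset.mem_union]; exact Or.inr hb⟩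
      · intro x hx y hy hxy
        beta_reduce at hxy
        simp only [PRE.map, markAux, posFin, Finset.mem_union, ← hP, ← hQ] at hx hy
        rcases hx with hx | hx <;> rcases hy with hy | hy
        · rw [if_pos hx, if_pos hy] at hxy
          exact h2 x hx y hy hxy
        · rw [if_pos hx, if_neg (fun h' => hdisj y h' hy)] at hxy
          exact absurd ((g1 y hy).2) (hxy ▸ hd _ ((h1 x hx).2))
        · rw [if_neg (fun h' => hdisj x h' hx), if_pos hy] at hxy
          exact absurd ((g1 x hx).2) (hxy.symm ▸ hd _ ((h1 y hy).2))
        · rw [if_neg (fun h' => hdisj x h' hx), if_neg (fun h' => hdisj y h' hy)] at hxy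
          exact g2 x hx y hy hxy
      · intro w hw
        simp only [PRE.map, markAux, lang, ← hP, ← hQ] at hw ⊢
        rcases (Language.mem_add _ _ _).1 hw with h | h
        · have hw' : w.map (fun x => if x ∈ P.posFin then σ₁ x else σ₂ x) = w.map σ₁ :=
            List.map_congr_left (fun x hx => if_pos (P.mem_pos_of_mem_lang w h x hx))
          rw [hw']
          exact (Language.mem_add _ _ _).2 (Or.inl (h3 w h))
        · have hw' : w.map (fun x => if x ∈ P.posFin then σ₁ x else σ₂ x) = w.map σ₂ :=
            List.map_congr_left (fun x hx =>
              if_neg (fun h' => hdisj x h' (Q.mem_pos_of_mem_lang w h x hx)))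
          rw [hw']
          exact (Language.mem_add _ _ _).2 (Or.inr (g3 w h))

end Relabel


end PRE

lemma list_map_injOn {γ δ : Type} {f : γ → δ} {S : Set γ} (hinj : Set.InjOn f S) :
    ∀ l₁ l₂ : List γ, (∀ x ∈ l₁, x ∈ S) → (∀ x ∈ l₂, x ∈ S) → l₁.map f = l₂.map f →
      l₁ = l₂ := by
  intro l₁
  induction l₁ with
  | nil => intro l₂ _ _ h; simpa using (List.map_eq_nil_iff.1 h.symm)
  | cons a t ih =>
    intro l₂ h1 h2 h
    cases l₂ with
    | nil => simp at h
    | cons b t₂ =>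
      simp only [List.map_cons, List.cons.injEq] at h
      have hab : a = b := hinj (h1 a (by simp)) (h2 b (by simp)) h.1
      rw [hab, ih t₂ (fun x hx => h1 x (by simp [hx])) (fun x hx => h2 x (by simp [hx])) h.2]

lemma run_internal {σ' α : Type} (G : OA σ' α) :
    ∀ (l : List σ') (q : σ'), List.Chain' G.E (q :: (l ++ [G.snk])) → ∀ p ∈ l, G.Internal p := by
  intro l
  induction l with
  | nil => intro q _ p hp; simp at hp
  | cons x t ih =>
    intro q hch p hp
    rw [List.cons_append] at hch
    obtain ⟨hqx, hch'⟩ := List.isChain_cons_cons.1 hch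
    rcases List.mem_cons.1 hp with rfl | hp
    · constructor
      · intro h; rw [h] at hqx; exact G.not_into_src q hqx
      · intro h
        obtain ⟨hnext, -⟩ := List.isChain_cons.1 hch'
        have hne : t ++ [G.snk] ≠ [] := by simp
        have := hnext _ (by rw [List.head?_eq_head hne]; rfl)
        rw [h] at this
        exact G.not_out_snk _ this
    · exact ih x hch' p hp

section MainAux
variable {σ' α : Type} [DecidableEq α]

lemma run_chain_follow {G : OA σ' α} {r : PRE α} {ρ : σ' → α × ℕ}
    (hG : G.IsGlushkov r.mark ρ) :
    ∀ l : List σ', (∀ p ∈ l, G.Internal p) → List.Chain' G.E l →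
      List.Chain' (fun u v => v ∈ r.mark.followFin u) (l.map ρ) := by
  intro l
  induction l with
  | nil => intro _ _; exact List.isChain_nil
  | cons p t ih =>
    intro hint hch
    cases t with
    | nil => exact List.isChain_singleton _
    | cons q t' =>
      obtain ⟨h1, h2⟩ := List.isChain_cons_cons.1 hch
      refine List.isChain_cons_cons.2 ⟨?_, ih (fun x hx => hint x (by simp [hx])) h2⟩
      exact (hG.follow p q (hint p (by simp)) (hint q (by simp))).1 h1

lemma run_to_mark {G : OA σ' α} {r : PRE α} {ρ : σ' → α × ℕ}
    (hG : G.IsGlushkov r.mark ρ) (run : List σ') (hne : run ≠ [])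
    (hch : List.Chain' G.E (G.src :: (run ++ [G.snk]))) :
    run.map ρ ∈ r.mark.lang := by
  have hint : ∀ p ∈ run, G.Internal p := run_internal G run G.src hch
  obtain ⟨h1, h2⟩ := List.isChain_cons.1 hch
  obtain ⟨hrun, hsnkch, hlastedge⟩ := List.isChain_append.1 h2
  have hhead : run.head hne ∈ run := List.head_mem hne
  have hfirst : ρ (run.head hne) ∈ r.mark.firstFin := by
    refine (hG.first _ (hint _ hhead)).1 ?_
    refine h1 _ ?_
    rw [List.head?_append_of_ne_nil _ hne, List.head?_eq_head hne]
    rfl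
  have hlastmem : run.getLast hne ∈ run := List.getLast_mem hne
  have hlast : ρ (run.getLast hne) ∈ r.mark.lastFin := by
    refine (hG.last _ (hint _ hlastmem)).1 ?_
    refine hlastedge _ ?_ G.snk (by rfl)
    rw [List.getLast?_eq_getLast (l := run) hne]
    rfl
  refine PRE.glushkov_suff r.mark (r.mark_rep) (run.map ρ) (ρ (run.head hne))
    (ρ (run.getLast hne)) ?_ hfirst ?_ hlast (run_chain_follow hG run hint hrun)
  · rw [List.head?_eq_head (by simpa using hne : run.map ρ ≠ [])]
    rw [List.head_map]
  · rw [List.getLast?_eq_getLast (l := run.map ρ) (by simpa using hne)]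
    rw [List.getLast_map]

end MainAux
end Aux


/-- If G is a Glushkov translation of a deterministic k-ORE r, H a marking of G,
and s a SORE over the marked alphabet with L(s) = L(H), then strip(s) is
deterministic. -/
theorem stmt15 {σ' α : Type} [DecidableEq α] (k : ℕ) (r : PRE α)
    (hk : PRE.IsKORE k r) (hdet : r.Deterministic)
    (G : OA σ' α) (ρ : σ' → α × ℕ) (hG : G.IsGlushkov r.mark ρ)
    (H : OA σ' (α × ℕ)) (hH : G.IsMarking H)
    (s : PRE (α × ℕ)) (hsore : ∀ x : α × ℕ, s.rep x ≤ 1)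
    (hlang : ∀ w : List (α × ℕ), w ∈ s.lang ↔ H.Accepts w) :
    (s.map Prod.fst).Deterministic := by
  intro w v v' a i j hwi hwj
  by_contra hij
  obtain ⟨σf, hσ1, hσinj, hσlang⟩ :=
    PRE.relabel Prod.fst ((a, 0) : α × ℕ) s (fun _ => 0) hsore
  have hxi : ((a, i) : α × ℕ) ∈ ((s.map Prod.fst).markAux fun _ => 0).1.posFin :=
    PRE.mem_pos_of_mem_lang _ _ hwi _ (by simp)
  have hxj : ((a, j) : α × ℕ) ∈ ((s.map Prod.fst).markAux fun _ => 0).1.posFin :=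
    PRE.mem_pos_of_mem_lang _ _ hwj _ (by simp)
  have hfst_i : (σf (a, i)).1 = a := (hσ1 _ hxi).1
  have hfst_j : (σf (a, j)).1 = a := (hσ1 _ hxj).1
  have hσne : σf (a, i) ≠ σf (a, j) := by
    intro h
    exact hij (congrArg Prod.snd (hσinj _ hxi _ hxj h))
  have hW1 : w.map σf ++ σf (a, i) :: v.map σf ∈ s.lang := by
    have h := hσlang _ hwi
    rwa [List.map_append, List.map_cons] at h
  have hW2 : w.map σf ++ σf (a, j) :: v'.map σf ∈ s.lang := by
    have h := hσlang _ hwj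
    rwa [List.map_append, List.map_cons] at h
  obtain ⟨run1, hrm1, hrc1⟩ := (hlang _).1 hW1
  obtain ⟨run2, hrm2, hrc2⟩ := (hlang _).1 hW2
  obtain ⟨hsrc, hsnk, hE, hlab, hinj⟩ := hH
  rw [hsrc, hsnk, hE] at hrc1 hrc2
  have hint1 : ∀ p ∈ run1, G.Internal p := run_internal G run1 G.src hrc1
  have hint2 : ∀ p ∈ run2, G.Internal p := run_internal G run2 G.src hrc2
  obtain ⟨A1, rest1, hr1eq, hA1, hrest1⟩ := List.map_eq_append_iff.1 hrm1
  obtain ⟨p, B1, hrest1eq, hp, hB1⟩ := List.map_eq_cons_iff.1 hrest1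
  subst hrest1eq
  subst hr1eq
  obtain ⟨A2, rest2, hr2eq, hA2, hrest2⟩ := List.map_eq_append_iff.1 hrm2
  obtain ⟨q, B2, hrest2eq, hq, hB2⟩ := List.map_eq_cons_iff.1 hrest2
  subst hrest2eq
  subst hr2eq
  have hpint : G.Internal p := hint1 p (by simp)
  have hqint : G.Internal q := hint2 q (by simp)
  have hA12 : A1 = A2 :=
    list_map_injOn hinj A1 A2
      (fun x hx => hint1 x (List.mem_append_left _ hx))
      (fun x hx => hint2 x (List.mem_append_left _ hx))
      (hA1.trans hA2.symm)
  have hpq : p ≠ q := fun h => hσne (by rw [← hp, ← hq, h])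
  have hm1 : (A1 ++ p :: B1).map ρ ∈ r.mark.lang := run_to_mark hG _ (by simp) hrc1
  have hm2 : (A2 ++ q :: B2).map ρ ∈ r.mark.lang := run_to_mark hG _ (by simp) hrc2
  rw [List.map_append, List.map_cons] at hm1 hm2
  have hρp1 : (ρ p).1 = a := by
    rw [hG.strip p hpint, ← hlab p hpint.1 hpint.2, hp, hfst_i]
  have hρq1 : (ρ q).1 = a := by
    rw [hG.strip q hqint, ← hlab q hqint.1 hqint.2, hq, hfst_j]
  have hρp : ρ p = (a, (ρ p).2) := by rw [← hρp1]
  have hρq : ρ q = (a, (ρ q).2) := by rw [← hρq1]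
  rw [hρp] at hm1
  rw [hρq, ← hA12] at hm2
  have hsnd : (ρ p).2 = (ρ q).2 :=
    hdet (A1.map ρ) (B1.map ρ) (B2.map ρ) a (ρ p).2 (ρ q).2 hm1 hm2
  have : ρ p = ρ q := by rw [hρp, hρq, hsnd]
  exact hpq (hG.inj hpint hqint this)
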